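/- Let δ : ℕ → [0,1] satisfy δ(n) → 1 as n → ∞. Then there exist constants K₁, K₂ > 0 and N such that for all n ≥ N, K₁·max{1−δ(n), 1/n} ≤ (f⁺(n,δ(n))/n!)^{1/n} ≤ K₂·max{1−δ(n), 1/n}. -/

import Mathlib

/-- The number of linear extensions of a partial order `P` on `n` points:
bijections to `{1, ..., n}` (modeled as `Fin n` with its usual order) that
are strictly monotone with respect to `P`. -/
noncomputable def linExtCount (n : ℕ) (P : PartialOrder (Fin n)) : ℕ :=
  Nat.card {f : Fin n ≃ Fin n // ∀ x y : Fin n, P.lt x y → f x < f y}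

/-- The number of comparable pairs of `P`: each unordered comparable pair
`{x, y}` corresponds to exactly one ordered pair `(x, y)` with `x ≺ y`. -/
noncomputable def compCount (n : ℕ) (P : PartialOrder (Fin n)) : ℕ :=
  Nat.card {p : Fin n × Fin n // P.lt p.1 p.2}

/-- `f⁺(n, δ)`: the maximum number of linear extensions over partial orders on
`n` points with at least `δ·n(n-1)/2` comparable pairs. -/
noncomputable def fPlus (n : ℕ) (δ : ℝ) : ℕ :=
  sSup {m : ℕ | ∃ P : PartialOrder (Fin n),
    δ * ((n : ℝ) * ((n : ℝ) - 1) / 2) ≤ (compCount n P : ℝ) ∧ linExtCount n P = m}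


/-! ### Auxiliary definitions and lemmas -/


noncomputable def incPairs (n : ℕ) (P : PartialOrder (Fin n)) : ℕ :=
  Nat.card {p : Fin n × Fin n // p.1 ≠ p.2 ∧ ¬ P.lt p.1 p.2 ∧ ¬ P.lt p.2 p.1}

noncomputable def incN (n : ℕ) (P : PartialOrder (Fin n)) (x : Fin n) : ℕ :=
  Nat.card {y : Fin n // y ≠ x ∧ ¬ P.lt y x ∧ ¬ P.lt x y}

section NumericLemmas

lemma pow_le_three_pow_mul_factorial (m : ℕ) : (m : ℝ) ^ m ≤ 3 ^ m * (Nat.factorial m) := by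
  induction m with
  | zero => norm_num
  | succ k ih =>
    rcases Nat.eq_zero_or_pos k with rfl | hk
    · norm_num
    have h1 : ((k : ℝ) + 1) ^ k ≤ 3 * (k : ℝ) ^ k := by
      have hk0 : (0 : ℝ) < k := by exact_mod_cast hk
      have h2 : ((k : ℝ) + 1) ^ k = ((1 + 1 / k) * k) ^ k := by field_simp
      rw [h2, mul_pow]
      have h3 : (1 + 1 / (k : ℝ)) ^ k ≤ 3 := by
        have h4 : (1 + 1 / (k : ℝ)) ≤ Real.exp (1 / k) := by
          have := Real.add_one_le_exp (1 / (k : ℝ)); linarith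
        have h5 : (1 + 1 / (k : ℝ)) ^ k ≤ Real.exp (1 / k) ^ k :=
          pow_le_pow_left₀ (by positivity) h4 k
        have h6 : Real.exp (1 / (k : ℝ)) ^ k = Real.exp 1 := by
          rw [← Real.exp_nat_mul]; congr 1; field_simp
        rw [h6] at h5
        exact h5.trans (by linarith [Real.exp_one_lt_d9.le])
      exact mul_le_mul_of_nonneg_right h3 (by positivity)
    have hkn : (0:ℝ) ≤ (k:ℝ) + 1 := by positivity
    push_cast
    calc ((k : ℝ) + 1) ^ (k + 1) = ((k:ℝ)+1) * ((k:ℝ)+1) ^ k := by ring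
      _ ≤ ((k:ℝ)+1) * (3 * (k:ℝ) ^ k) := mul_le_mul_of_nonneg_left h1 hkn
      _ ≤ ((k:ℝ)+1) * (3 * (3 ^ k * (Nat.factorial k))) :=
          mul_le_mul_of_nonneg_left (by linarith) hkn
      _ = 3 ^ (k+1) * ((Nat.factorial k) * ((k:ℝ)+1)) := by ring
      _ = 3 ^ (k+1) * ((k+1).factorial : ℝ) := by
          rw [Nat.factorial_succ]; push_cast; ring

lemma nat_pow_le_three_pow_mul_factorial (m : ℕ) : m ^ m ≤ 3 ^ m * Nat.factorial m := by
  exact_mod_cast pow_le_three_pow_mul_factorial m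

lemma factorial_add_le (n k m : ℕ) (h : k + m ≤ n) :
    Nat.factorial (k + m) ≤ n ^ m * Nat.factorial k := by
  induction m with
  | zero => simp
  | succ j ih =>
    have h2 := ih (by omega)
    calc Nat.factorial (k + (j+1)) = (k + j + 1) * Nat.factorial (k + j) := by
          rw [show k + (j+1) = (k+j) + 1 by ring, Nat.factorial_succ]
      _ ≤ n * (n ^ j * Nat.factorial k) := Nat.mul_le_mul (by omega) h2
      _ = n ^ (j+1) * Nat.factorial k := by ring

lemma factorial_le_iter (n m : ℕ) (hm : 0 < m) :
    Nat.factorial n ≤ n ^ (m * (n / m)) * Nat.factorial (n % m) := by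
  have key : ∀ j, n % m + j * m ≤ n →
      Nat.factorial (n % m + j * m) ≤ n ^ (j * m) * Nat.factorial (n % m) := by
    intro j
    induction j with
    | zero => simp
    | succ i ih =>
      intro h
      have h1 : n % m + (i+1) * m = (n % m + i * m) + m := by ring
      have h2 : n % m + i * m ≤ n := by omega
      calc Nat.factorial (n % m + (i+1)*m) = Nat.factorial ((n % m + i*m) + m) := by rw [h1]
        _ ≤ n ^ m * Nat.factorial (n % m + i * m) := factorial_add_le n _ m (by omega)
        _ ≤ n ^ m * (n ^ (i*m) * Nat.factorial (n % m)) := Nat.mul_le_mul_left _ (ih h2)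
        _ = n ^ ((i+1)*m) * Nat.factorial (n % m) := by ring
  have hn : n % m + (n / m) * m = n := Nat.mod_add_div' n m
  have := key (n / m) (by omega)
  rw [hn] at this
  calc Nat.factorial n ≤ n ^ (n/m * m) * Nat.factorial (n % m) := this
    _ = n ^ (m * (n/m)) * Nat.factorial (n % m) := by rw [Nat.mul_comm (n/m) m]

lemma key_nat (n m : ℕ) (hm : 0 < m) (hmn : m ≤ n) :
    m ^ n * Nat.factorial n ≤
      (Nat.factorial m) ^ (n / m) * Nat.factorial (n % m) * (3 * n) ^ n := by
  set t := n / m with ht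
  set r := n % m with hr
  have hn : m * t + r = n := Nat.div_add_mod n m
  have hmt : m * t ≤ n := by omega
  have h1 : Nat.factorial n ≤ n ^ (m * t) * Nat.factorial r := factorial_le_iter n m hm
  have h2 : (m ^ m) ^ t ≤ (3 ^ m * Nat.factorial m) ^ t :=
    Nat.pow_le_pow_left (nat_pow_le_three_pow_mul_factorial m) t
  have h3 : m ^ n = m ^ (m * t) * m ^ r := by rw [← pow_add, hn]
  have h4 : m ^ r ≤ n ^ r := Nat.pow_le_pow_left hmn r
  have h5 : (3:ℕ) ^ (m*t) ≤ 3 ^ n := Nat.pow_le_pow_right (by norm_num) hmt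
  calc m ^ n * Nat.factorial n
      ≤ m ^ n * (n ^ (m * t) * Nat.factorial r) := Nat.mul_le_mul_left _ h1
    _ = m ^ (m*t) * m ^ r * (n ^ (m*t) * Nat.factorial r) := by rw [h3]
    _ ≤ (3 ^ m * Nat.factorial m) ^ t * n ^ r * (n ^ (m*t) * Nat.factorial r) := by
        apply Nat.mul_le_mul_right
        apply Nat.mul_le_mul _ h4
        calc m ^ (m*t) = (m ^ m) ^ t := by rw [← pow_mul]
          _ ≤ (3 ^ m * Nat.factorial m) ^ t := h2
    _ = (Nat.factorial m) ^ t * Nat.factorial r * (3 ^ (m*t) * (n ^ r * n ^ (m*t))) := by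
        rw [mul_pow, ← pow_mul]; ring
    _ ≤ (Nat.factorial m) ^ t * Nat.factorial r * (3 ^ n * (n ^ r * n ^ (m*t))) := by
        apply Nat.mul_le_mul_left
        exact Nat.mul_le_mul_right _ h5
    _ = (Nat.factorial m) ^ t * Nat.factorial r * (3 ^ n * n ^ n) := by
        rw [← pow_add, show r + m * t = n by omega]
    _ = (Nat.factorial m) ^ t * Nat.factorial r * (3 * n) ^ n := by rw [mul_pow]

end NumericLemmas

/-! ### The block order -/

def blockOrder (n m : ℕ) : PartialOrder (Fin n) where
  le x y := x = y ∨ x.val / m < y.val / m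
  lt x y := x.val / m < y.val / m
  le_refl x := Or.inl rfl
  le_trans x y z hxy hyz := by
    rcases hxy with rfl | h
    · exact hyz
    rcases hyz with rfl | h'
    · exact Or.inr h
    · exact Or.inr (h.trans h')
  lt_iff_le_not_ge x y := by
    constructor
    · intro h
      refine ⟨Or.inr h, ?_⟩
      rintro (rfl | h')
      · exact Nat.lt_irrefl _ h
      · exact absurd h' (Nat.not_lt.2 h.le)
    · rintro ⟨(rfl | h), h2⟩
      · exact absurd (Or.inl rfl) h2
      · exact h
  le_antisymm x y hxy hyx := by
    rcases hxy with rfl | h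
    · rfl
    rcases hyx with rfl | h'
    · rfl
    · exact absurd h' (Nat.not_lt.2 h.le)

lemma blockOrder_lt (n m : ℕ) (x y : Fin n) :
    (blockOrder n m).lt x y ↔ x.val / m < y.val / m := Iff.rfl

namespace BlockAux

def bsize (n m b : ℕ) : ℕ := min m (n - b * m)

def act (n m : ℕ) (H : ∀ b : ℕ, Equiv.Perm (Fin (bsize n m b))) (b j : ℕ) : ℕ :=
  if h : j < bsize n m b then (H b ⟨j, h⟩).val else j

lemma act_lt (n m : ℕ) (H : ∀ b : ℕ, Equiv.Perm (Fin (bsize n m b))) {b j : ℕ}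
    (h : j < bsize n m b) : act n m H b j < bsize n m b := by
  rw [act, dif_pos h]; exact (H b ⟨j, h⟩).2

lemma act_inj (n m : ℕ) (H : ∀ b : ℕ, Equiv.Perm (Fin (bsize n m b))) {b j j' : ℕ}
    (h : j < bsize n m b) (h' : j' < bsize n m b)
    (e : act n m H b j = act n m H b j') : j = j' := by
  simp only [act] at e
  rw [dif_pos h, dif_pos h'] at e
  have := (H b).injective (Fin.ext e)
  exact congrArg Fin.val this

lemma mod_lt_bsize (n m : ℕ) (hm : 0 < m) (x : Fin n) :
    x.val % m < bsize n m (x.val / m) := by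
  have h1 : x.val / m * m + x.val % m = x.val := Nat.div_add_mod' x.val m
  have h2 := x.2
  have h3 := Nat.mod_lt x.val hm
  exact lt_min h3 (by omega)

def phiFun (n m : ℕ) (hm : 0 < m) (H : ∀ b : ℕ, Equiv.Perm (Fin (bsize n m b))) :
    Fin n → Fin n := fun x =>
  ⟨x.val / m * m + act n m H (x.val / m) (x.val % m), by
    have h2 := act_lt n m H (mod_lt_bsize n m hm x)
    have h3 : x.val / m * m ≤ x.val := Nat.div_mul_le_self _ _
    have h4 := x.2
    rw [bsize] at h2
    have h5 : act n m H (x.val / m) (x.val % m) < n - x.val / m * m :=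
      lt_of_lt_of_le h2 (min_le_right _ _)
    omega⟩

lemma phiFun_val (n m : ℕ) (hm : 0 < m) (H : ∀ b : ℕ, Equiv.Perm (Fin (bsize n m b)))
    (x : Fin n) :
    (phiFun n m hm H x).val = x.val / m * m + act n m H (x.val / m) (x.val % m) := rfl

lemma phiFun_div (n m : ℕ) (hm : 0 < m) (H : ∀ b : ℕ, Equiv.Perm (Fin (bsize n m b)))
    (x : Fin n) : (phiFun n m hm H x).val / m = x.val / m := by
  rw [phiFun_val]
  have h2 := act_lt n m H (mod_lt_bsize n m hm x)
  have h5 : act n m H (x.val / m) (x.val % m) < m := lt_of_lt_of_le h2 (min_le_left _ _)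
  rw [Nat.add_comm, Nat.add_mul_div_right _ _ hm, Nat.div_eq_of_lt h5, Nat.zero_add]

lemma phiFun_inj (n m : ℕ) (hm : 0 < m) (H : ∀ b : ℕ, Equiv.Perm (Fin (bsize n m b))) :
    Function.Injective (phiFun n m hm H) := by
  intro x y e
  have hdiv : x.val / m = y.val / m := by
    rw [← phiFun_div n m hm H x, ← phiFun_div n m hm H y, e]
  have hvals : (phiFun n m hm H x).val = (phiFun n m hm H y).val := by rw [e]
  rw [phiFun_val, phiFun_val, hdiv] at hvals
  have hact : act n m H (y.val / m) (x.val % m) = act n m H (y.val / m) (y.val % m) := by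
    omega
  have h1 := mod_lt_bsize n m hm x
  rw [hdiv] at h1
  have h2 := mod_lt_bsize n m hm y
  have hmod := act_inj n m H h1 h2 hact
  apply Fin.ext
  have e1 : x.val / m * m + x.val % m = x.val := Nat.div_add_mod' x.val m
  have e2 : y.val / m * m + y.val % m = y.val := Nat.div_add_mod' y.val m
  have e3 : x.val / m * m = y.val / m * m := by rw [hdiv]
  omega

noncomputable def phiEquiv (n m : ℕ) (hm : 0 < m)
    (H : ∀ b : ℕ, Equiv.Perm (Fin (bsize n m b))) : Fin n ≃ Fin n :=
  Equiv.ofBijective _ (Finite.injective_iff_bijective.mp (phiFun_inj n m hm H))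

lemma phiEquiv_apply (n m : ℕ) (hm : 0 < m) (H : ∀ b : ℕ, Equiv.Perm (Fin (bsize n m b)))
    (x : Fin n) : phiEquiv n m hm H x = phiFun n m hm H x := rfl

lemma phiEquiv_val (n m : ℕ) (hm : 0 < m) (H : ∀ b : ℕ, Equiv.Perm (Fin (bsize n m b)))
    (x : Fin n) :
    (phiEquiv n m hm H x).val = x.val / m * m + act n m H (x.val / m) (x.val % m) := rfl

lemma phiEquiv_ext (n m : ℕ) (hm : 0 < m) (H : ∀ b : ℕ, Equiv.Perm (Fin (bsize n m b))) :
    ∀ x y : Fin n, (blockOrder n m).lt x y → phiEquiv n m hm H x < phiEquiv n m hm H y := by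
  intro x y h
  rw [blockOrder_lt] at h
  have h1 : (phiEquiv n m hm H x).val / m < (phiEquiv n m hm H y).val / m := by
    rw [phiEquiv_apply, phiEquiv_apply, phiFun_div, phiFun_div]; exact h
  exact Nat.lt_of_div_lt_div h1

def extH (n m : ℕ) (H : ∀ b : Fin (n/m+1), Equiv.Perm (Fin (bsize n m b.val))) :
    ∀ b : ℕ, Equiv.Perm (Fin (bsize n m b)) :=
  fun b => if h : b < n/m+1 then H ⟨b, h⟩ else Equiv.refl _

lemma block_lower (n m : ℕ) (hm : 0 < m) :
    Nat.factorial m ^ (n / m) * Nat.factorial (n % m) ≤ linExtCount n (blockOrder n m) := by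
  classical
  have hcard : Nat.card (∀ b : Fin (n/m+1), Equiv.Perm (Fin (bsize n m b.val)))
      = Nat.factorial m ^ (n/m) * Nat.factorial (n % m) := by
    rw [Nat.card_eq_fintype_card, Fintype.card_pi]
    have hc : ∀ b : Fin (n/m+1), Fintype.card (Equiv.Perm (Fin (bsize n m b.val)))
        = Nat.factorial (bsize n m b.val) := fun b => by
      rw [Fintype.card_perm, Fintype.card_fin]
    rw [Finset.prod_congr rfl (fun b _ => hc b), Fin.prod_univ_castSucc]
    have hfull : ∀ b : Fin (n/m), bsize n m (Fin.castSucc b).val = m := by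
      intro b
      have hb := b.2
      have h1 : (b.val + 1) * m ≤ (n/m) * m := Nat.mul_le_mul_right m hb
      have h2 : (n/m) * m ≤ n := Nat.div_mul_le_self n m
      have h3 : (b.val + 1) * m = b.val * m + m := by ring
      rw [bsize, Fin.coe_castSucc]
      omega
    have hlast : bsize n m (Fin.last (n/m)).val = n % m := by
      have h1 : n / m * m + n % m = n := Nat.div_add_mod' n m
      have h2 : n % m < m := Nat.mod_lt n hm
      rw [bsize, Fin.val_last]
      omega
    rw [hlast, Finset.prod_congr rfl (fun b _ => by rw [hfull b])]
    rw [Finset.prod_const, Finset.card_univ, Fintype.card_fin]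
  rw [← hcard, linExtCount]
  apply Nat.card_le_card_of_injective
    (f := fun H : ∀ b : Fin (n/m+1), Equiv.Perm (Fin (bsize n m b.val)) =>
      (⟨phiEquiv n m hm (extH n m H), phiEquiv_ext n m hm (extH n m H)⟩ :
        {f : Fin n ≃ Fin n // ∀ x y : Fin n, (blockOrder n m).lt x y → f x < f y}))
  intro H H' e
  have efun : ∀ x : Fin n, phiEquiv n m hm (extH n m H) x = phiEquiv n m hm (extH n m H') x := by
    intro x
    have h2 : phiEquiv n m hm (extH n m H) = phiEquiv n m hm (extH n m H') :=
      congrArg Subtype.val e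
    rw [h2]
  funext b
  apply Equiv.ext
  intro j
  have hj := j.2
  have hj1 : j.val < m := lt_of_lt_of_le hj (min_le_left _ _)
  have hj2 : j.val < n - b.val * m := lt_of_lt_of_le hj (min_le_right _ _)
  have hx : b.val * m + j.val < n := by omega
  set x : Fin n := ⟨b.val * m + j.val, hx⟩ with hxdef
  have hq : x.val / m = b.val := by
    show (b.val * m + j.val) / m = b.val
    rw [Nat.add_comm, Nat.add_mul_div_right _ _ hm, Nat.div_eq_of_lt hj1, Nat.zero_add]
  have hr : x.val % m = j.val := by
    show (b.val * m + j.val) % m = j.val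
    rw [Nat.add_comm, Nat.add_mul_mod_self_right, Nat.mod_eq_of_lt hj1]
  have hv := congrArg Fin.val (efun x)
  rw [phiEquiv_val, phiEquiv_val, hq, hr] at hv
  have hact : act n m (extH n m H) b.val j.val = act n m (extH n m H') b.val j.val := by omega
  have hjb : j.val < bsize n m b.val := j.2
  simp only [act, dif_pos hjb] at hact
  have hbb : b.val < n/m + 1 := b.2
  simp only [extH, dif_pos hbb, Fin.eta] at hact
  exact Fin.ext hact

end BlockAux

/-! ### Counting lemmas -/

lemma plt_irrefl {α : Type*} (P : PartialOrder α) (x : α) : ¬ P.lt x x := by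
  intro h
  rcases (P.lt_iff_le_not_ge x x).mp h with ⟨h1, h2⟩
  exact h2 h1

lemma plt_asymm {α : Type*} (P : PartialOrder α) {x y : α} (h : P.lt x y) : ¬ P.lt y x := by
  intro h'
  rcases (P.lt_iff_le_not_ge x y).mp h with ⟨h1, h2⟩
  rcases (P.lt_iff_le_not_ge y x).mp h' with ⟨h3, h4⟩
  exact h2 h3

lemma plt_ne {α : Type*} (P : PartialOrder α) {x y : α} (h : P.lt x y) : x ≠ y := by
  rintro rfl
  exact plt_irrefl P x h

open Finset in
lemma card_swap_filter (n : ℕ) (P : PartialOrder (Fin n))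
    [DecidablePred (fun p : Fin n × Fin n => P.lt p.1 p.2)]
    [DecidablePred (fun p : Fin n × Fin n => P.lt p.2 p.1)] :
    (univ.filter (fun p : Fin n × Fin n => P.lt p.2 p.1)).card
      = (univ.filter (fun p : Fin n × Fin n => P.lt p.1 p.2)).card := by
  apply Finset.card_bij' (i := fun p _ => Prod.swap p) (j := fun p _ => Prod.swap p)
  · intro p hp
    simp only [mem_filter, mem_univ, true_and] at hp ⊢
    exact hp
  · intro p hp
    simp only [mem_filter, mem_univ, true_and] at hp ⊢
    exact hp
  · intro p _; simp
  · intro p _; simp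

lemma compCount_eq_filter (n : ℕ) (P : PartialOrder (Fin n))
    [DecidablePred (fun p : Fin n × Fin n => P.lt p.1 p.2)] :
    compCount n P = (Finset.univ.filter (fun p : Fin n × Fin n => P.lt p.1 p.2)).card := by
  rw [compCount, Nat.card_eq_fintype_card, Fintype.card_subtype]

open Finset in
lemma pair_count (n : ℕ) (P : PartialOrder (Fin n)) :
    n * n = n + 2 * compCount n P + incPairs n P := by
  classical
  have hip : incPairs n P = (univ.filter (fun p : Fin n × Fin n =>
      p.1 ≠ p.2 ∧ ¬ P.lt p.1 p.2 ∧ ¬ P.lt p.2 p.1)).card := by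
    rw [incPairs, Nat.card_eq_fintype_card, Fintype.card_subtype]
  have h0 : (univ : Finset (Fin n × Fin n)).card = n * n := by
    simp [Finset.card_univ]
  have h1 := Finset.card_filter_add_card_filter_not
    (s := (univ : Finset (Fin n × Fin n))) (p := fun p => p.1 = p.2)
  have hdiag : (univ.filter (fun p : Fin n × Fin n => p.1 = p.2)).card = n := by
    have himg : univ.filter (fun p : Fin n × Fin n => p.1 = p.2)
        = (univ : Finset (Fin n)).image (fun x => (x, x)) := by
      ext p
      simp only [mem_filter, mem_univ, true_and, mem_image]
      constructor
      · intro h; exact ⟨p.1, by rw [h]; exact Prod.ext h.symm rfl⟩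
      · rintro ⟨x, rfl⟩; rfl
    have hinj : Function.Injective (fun x : Fin n => (x, x)) := by
      intro a b h
      exact congrArg Prod.fst h
    rw [himg, Finset.card_image_of_injective _ hinj, Finset.card_univ, Fintype.card_fin]
  have h2 := Finset.card_filter_add_card_filter_not
    (s := univ.filter (fun p : Fin n × Fin n => ¬ p.1 = p.2))
    (p := fun p => P.lt p.1 p.2)
  have h3 := Finset.card_filter_add_card_filter_not
    (s := (univ.filter (fun p : Fin n × Fin n => ¬ p.1 = p.2)).filter
        (fun p => ¬ P.lt p.1 p.2))
    (p := fun p => P.lt p.2 p.1)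
  simp only [Finset.filter_filter, and_assoc] at h2 h3
  have e1 : (univ.filter (fun p : Fin n × Fin n => ¬ p.1 = p.2 ∧ P.lt p.1 p.2)).card
      = compCount n P := by
    rw [compCount_eq_filter]
    congr 1
    apply Finset.filter_congr
    intro p _
    exact ⟨fun h => h.2, fun h => ⟨plt_ne P h, h⟩⟩
  have e2 : (univ.filter (fun p : Fin n × Fin n =>
      ¬ p.1 = p.2 ∧ ¬ P.lt p.1 p.2 ∧ P.lt p.2 p.1)).card = compCount n P := by
    rw [compCount_eq_filter, ← card_swap_filter]
    congr 1
    apply Finset.filter_congr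
    intro p _
    constructor
    · rintro ⟨h1, h2, h3⟩; exact h3
    · exact fun h => ⟨fun hq => plt_ne P h hq.symm, plt_asymm P h, h⟩
  have e3 : (univ.filter (fun p : Fin n × Fin n =>
      ¬ p.1 = p.2 ∧ ¬ P.lt p.1 p.2 ∧ ¬ P.lt p.2 p.1)).card
      = (univ.filter (fun p : Fin n × Fin n =>
          p.1 ≠ p.2 ∧ ¬ P.lt p.1 p.2 ∧ ¬ P.lt p.2 p.1)).card := by
    congr 1
  omega

open Finset in
lemma fin_card_filter_lt (n : ℕ) (a : Fin n) :
    (univ.filter (fun z : Fin n => z < a)).card = a.val := by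
  have hI : univ.filter (fun z : Fin n => z < a) = Finset.Iio a := by
    ext z; simp
  rw [hI, Fin.card_Iio]

open Finset in
lemma sum_incN (n : ℕ) (P : PartialOrder (Fin n)) :
    ∑ x : Fin n, incN n P x = incPairs n P := by
  classical
  have hip : incPairs n P = (univ.filter (fun p : Fin n × Fin n =>
      p.1 ≠ p.2 ∧ ¬ P.lt p.1 p.2 ∧ ¬ P.lt p.2 p.1)).card := by
    rw [incPairs, Nat.card_eq_fintype_card, Fintype.card_subtype]
  have hin : ∀ x : Fin n, incN n P x = (univ.filter (fun y : Fin n =>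
      y ≠ x ∧ ¬ P.lt y x ∧ ¬ P.lt x y)).card := by
    intro x
    rw [incN, Nat.card_eq_fintype_card, Fintype.card_subtype]
  rw [hip]
  rw [Finset.card_eq_sum_card_fiberwise (f := Prod.snd) (t := univ) (fun p _ => mem_univ _)]
  apply Finset.sum_congr rfl
  intro x _
  rw [hin x]
  apply Finset.card_bij' (i := fun y _ => (y, x)) (j := fun p _ => p.1)
  · intro y hy
    simp only [mem_filter, mem_univ, true_and] at hy ⊢
    exact ⟨hy, by trivial⟩
  · intro p hp
    simp only [mem_filter, mem_univ, true_and] at hp ⊢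
    rcases hp with ⟨⟨h1, h2, h3⟩, h4⟩
    subst h4
    exact ⟨h1, h2, h3⟩
  · intro y _; rfl
  · intro p hp
    simp only [mem_filter, mem_univ, true_and] at hp
    exact Prod.ext rfl hp.2.symm

open Finset in
lemma linExt_le_prod (n : ℕ) (P : PartialOrder (Fin n)) :
    linExtCount n P ≤ ∏ x : Fin n, (incN n P x + 1) := by
  classical
  have hin : ∀ x : Fin n, incN n P x = (univ.filter (fun y : Fin n =>
      y ≠ x ∧ ¬ P.lt y x ∧ ¬ P.lt x y)).card := by
    intro x
    rw [incN, Nat.card_eq_fintype_card, Fintype.card_subtype]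
  have hcard : Nat.card (∀ x : Fin n, Fin (incN n P x + 1)) = ∏ x, (incN n P x + 1) := by
    rw [Nat.card_eq_fintype_card, Fintype.card_pi]
    simp
  rw [linExtCount, ← hcard]
  have key : ∀ (f : {f : Fin n ≃ Fin n // ∀ x y : Fin n, P.lt x y → f x < f y}) (x : Fin n),
      (f.1 x).val = (univ.filter (fun y : Fin n => P.lt y x)).card
        + (univ.filter (fun y : Fin n =>
            (y ≠ x ∧ ¬ P.lt y x ∧ ¬ P.lt x y) ∧ f.1 y < f.1 x)).card := by
    intro f x
    have h1 : (f.1 x).val = (univ.filter (fun y : Fin n => f.1 y < f.1 x)).card := by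
      rw [← fin_card_filter_lt n (f.1 x)]
      symm
      apply Finset.card_bij' (i := fun y _ => f.1 y) (j := fun z _ => f.1.symm z)
      · intro y hy
        simp only [mem_filter, mem_univ, true_and] at hy ⊢
        exact hy
      · intro z hz
        simp only [mem_filter, mem_univ, true_and] at hz ⊢
        simpa using hz
      · intro y _; simp
      · intro z _; simp
    rw [h1]
    have hsplit : univ.filter (fun y : Fin n => f.1 y < f.1 x)
        = univ.filter (fun y : Fin n => P.lt y x)
          ∪ univ.filter (fun y : Fin n =>
              (y ≠ x ∧ ¬ P.lt y x ∧ ¬ P.lt x y) ∧ f.1 y < f.1 x) := by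
      rw [← Finset.filter_or]
      apply Finset.filter_congr
      intro y _
      constructor
      · intro hlt
        by_cases hyx : P.lt y x
        · exact Or.inl hyx
        · refine Or.inr ⟨⟨?_, hyx, ?_⟩, hlt⟩
          · rintro rfl
            rw [Fin.lt_def] at hlt
            omega
          · intro hxy
            have h5 := f.2 x y hxy
            rw [Fin.lt_def] at hlt h5
            omega
      · rintro (h | ⟨_, h⟩)
        · exact f.2 y x h
        · exact h
    rw [hsplit, Finset.card_union_of_disjoint]
    rw [Finset.disjoint_left]
    intro y hy hy'
    simp only [mem_filter, mem_univ, true_and] at hy hy'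
    exact hy'.1.2.1 hy
  apply Nat.card_le_card_of_injective
    (f := fun f : {f : Fin n ≃ Fin n // ∀ x y : Fin n, P.lt x y → f x < f y} =>
      (fun x => (⟨(univ.filter (fun y : Fin n =>
          (y ≠ x ∧ ¬ P.lt y x ∧ ¬ P.lt x y) ∧ f.1 y < f.1 x)).card, by
        apply Nat.lt_succ_of_le
        rw [hin x]
        apply Finset.card_le_card
        apply Finset.monotone_filter_right
        exact fun y _ h => h.1⟩ : Fin (incN n P x + 1))))
  intro f g e
  have evals : ∀ x : Fin n, (univ.filter (fun y : Fin n =>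
      (y ≠ x ∧ ¬ P.lt y x ∧ ¬ P.lt x y) ∧ f.1 y < f.1 x)).card
      = (univ.filter (fun y : Fin n =>
      (y ≠ x ∧ ¬ P.lt y x ∧ ¬ P.lt x y) ∧ g.1 y < g.1 x)).card := by
    intro x
    exact congrArg Fin.val (congrFun e x)
  apply Subtype.ext
  apply Equiv.ext
  intro x
  apply Fin.ext
  rw [key f x, key g x, evals x]

lemma incPairs_block_le (n m : ℕ) (hm : 0 < m) :
    incPairs n (blockOrder n m) ≤ n * m := by
  have h1 : incPairs n (blockOrder n m) ≤ Nat.card (Fin n × Fin m) := by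
    rw [incPairs]
    apply Nat.card_le_card_of_injective
      (f := fun p : {p : Fin n × Fin n // p.1 ≠ p.2 ∧ ¬ (blockOrder n m).lt p.1 p.2
          ∧ ¬ (blockOrder n m).lt p.2 p.1} =>
        ((p.1.1, ⟨p.1.2.val % m, Nat.mod_lt _ hm⟩) : Fin n × Fin m))
    rintro ⟨p, hp1, hp2, hp3⟩ ⟨q, hq1, hq2, hq3⟩ e
    rw [blockOrder_lt] at hp2 hp3 hq2 hq3
    simp only [Prod.mk.injEq] at e
    rcases e with ⟨e1, e2⟩
    have e2' : p.2.val % m = q.2.val % m := congrArg Fin.val e2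
    apply Subtype.ext
    have hpb : p.1.val / m = p.2.val / m :=
      Nat.le_antisymm (Nat.not_lt.mp hp3) (Nat.not_lt.mp hp2)
    have hqb : q.1.val / m = q.2.val / m :=
      Nat.le_antisymm (Nat.not_lt.mp hq3) (Nat.not_lt.mp hq2)
    have e1' : p.1.val = q.1.val := congrArg Fin.val e1
    have hdiv : p.2.val / m = q.2.val / m := by rw [← hpb, ← hqb, e1']
    have hmod1 : p.2.val / m * m + p.2.val % m = p.2.val := Nat.div_add_mod' _ m
    have hmod2 : q.2.val / m * m + q.2.val % m = q.2.val := Nat.div_add_mod' _ m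
    have : p.2.val / m * m = q.2.val / m * m := by rw [hdiv]
    have hv2 : p.2.val = q.2.val := by rw [← hmod1, ← hmod2, this, e2']
    exact Prod.ext e1 (Fin.ext hv2)
  calc incPairs n (blockOrder n m) ≤ Nat.card (Fin n × Fin m) := h1
    _ = n * m := by simp

lemma incPairs_chain (n : ℕ) : incPairs n (blockOrder n 1) = 0 := by
  rw [incPairs, Nat.card_eq_zero]
  left
  constructor
  rintro ⟨p, h1, h2, h3⟩
  rw [blockOrder_lt] at h2 h3
  simp only [Nat.div_one] at h2 h3
  have : p.1.val = p.2.val := by omega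
  exact h1 (Fin.ext this)

lemma linExtCount_le_factorial (n : ℕ) (P : PartialOrder (Fin n)) :
    linExtCount n P ≤ Nat.factorial n := by
  have h1 : linExtCount n P ≤ Nat.card (Fin n ≃ Fin n) := by
    rw [linExtCount]
    exact Nat.card_le_card_of_injective Subtype.val Subtype.val_injective
  have h2 : Nat.card (Fin n ≃ Fin n) = Nat.factorial n := by
    rw [Nat.card_eq_fintype_card]
    rw [show Fintype.card (Fin n ≃ Fin n) = Fintype.card (Equiv.Perm (Fin n)) from rfl]
    rw [Fintype.card_perm, Fintype.card_fin]
  omega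

/-! ### AM-GM -/

lemma prod_le_avg_pow (n : ℕ) (hn : 0 < n) (z : Fin n → ℝ) (hz : ∀ x, 0 ≤ z x) :
    ∏ x, z x ≤ ((∑ x, z x) / n) ^ n := by
  have hn' : (0:ℝ) < n := by exact_mod_cast hn
  have hw : ∑ _x : Fin n, (n:ℝ)⁻¹ = 1 := by
    rw [Finset.sum_const, Finset.card_univ, Fintype.card_fin, nsmul_eq_mul]
    field_simp
  have h := Real.geom_mean_le_arith_mean_weighted Finset.univ (fun _ => (n:ℝ)⁻¹) z
    (fun _ _ => by positivity) hw (fun i _ => hz i)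
  have hL : (∏ x, z x ^ ((n:ℝ)⁻¹)) ^ n = ∏ x, z x := by
    rw [← Finset.prod_pow]
    apply Finset.prod_congr rfl
    intro x _
    exact Real.rpow_inv_natCast_pow (hz x) hn.ne'
  have hprod_nonneg : 0 ≤ ∏ x, z x ^ ((n:ℝ)⁻¹) :=
    Finset.prod_nonneg (fun i _ => Real.rpow_nonneg (hz i) _)
  calc ∏ x, z x = (∏ x, z x ^ ((n:ℝ)⁻¹)) ^ n := hL.symm
    _ ≤ (∑ x, (n:ℝ)⁻¹ * z x) ^ n := pow_le_pow_left₀ hprod_nonneg h n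
    _ = ((∑ x, z x) / n) ^ n := by
        rw [← Finset.mul_sum]
        congr 1
        field_simp



def fPlusSet (n : ℕ) (d : ℝ) : Set ℕ :=
  {m : ℕ | ∃ P : PartialOrder (Fin n),
    d * ((n : ℝ) * ((n : ℝ) - 1) / 2) ≤ (compCount n P : ℝ) ∧ linExtCount n P = m}

lemma fPlus_eq_sSup (n : ℕ) (d : ℝ) : fPlus n d = sSup (fPlusSet n d) := rfl

lemma fPlusSet_bddAbove (n : ℕ) (d : ℝ) : BddAbove (fPlusSet n d) := by
  refine ⟨Nat.factorial n, ?_⟩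
  rintro k ⟨P, _, hP⟩
  rw [← hP]
  exact linExtCount_le_factorial n P

lemma chain_compCount (n : ℕ) (d : ℝ) (hd1 : d ≤ 1) :
    d * ((n : ℝ) * ((n : ℝ) - 1) / 2) ≤ (compCount n (blockOrder n 1) : ℝ) := by
  have h := pair_count n (blockOrder n 1)
  rw [incPairs_chain] at h
  have hCR : (n:ℝ) * n = n + 2 * (compCount n (blockOrder n 1) : ℝ) := by
    exact_mod_cast h
  have hX : (n : ℝ) * ((n : ℝ) - 1) / 2 = (compCount n (blockOrder n 1) : ℝ) := by
    linarith
  rw [hX]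
  have hC0 : (0:ℝ) ≤ (compCount n (blockOrder n 1) : ℝ) := Nat.cast_nonneg _
  nlinarith

lemma fPlusSet_nonempty (n : ℕ) (d : ℝ) (hd1 : d ≤ 1) : (fPlusSet n d).Nonempty :=
  ⟨linExtCount n (blockOrder n 1), blockOrder n 1, chain_compCount n d hd1, rfl⟩

lemma fPlus_mem (n : ℕ) (d : ℝ) (hd1 : d ≤ 1) : fPlus n d ∈ fPlusSet n d :=
  Nat.sSup_mem (fPlusSet_nonempty n d hd1) (fPlusSet_bddAbove n d)

lemma fPlus_ge (n : ℕ) (d : ℝ) {m : ℕ}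
    (hcond : d * ((n : ℝ) * ((n : ℝ) - 1) / 2) ≤ (compCount n (blockOrder n m) : ℝ)) :
    linExtCount n (blockOrder n m) ≤ fPlus n d :=
  le_csSup (fPlusSet_bddAbove n d) ⟨blockOrder n m, hcond, rfl⟩

set_option maxHeartbeats 1000000 in
theorem fplus_rate_delta_to_one (δ : ℕ → ℝ)
    (hδ : ∀ n, 0 ≤ δ n ∧ δ n ≤ 1)
    (hlim : Filter.Tendsto δ Filter.atTop (nhds 1)) :
    ∃ K₁ K₂ : ℝ, ∃ N : ℕ, 0 < K₁ ∧ 0 < K₂ ∧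
      ∀ n : ℕ, N ≤ n →
        K₁ * max (1 - δ n) (1 / (n : ℝ)) ≤
          ((fPlus n (δ n) : ℝ) / (Nat.factorial n : ℝ)) ^ ((n : ℝ)⁻¹) ∧
        ((fPlus n (δ n) : ℝ) / (Nat.factorial n : ℝ)) ^ ((n : ℝ)⁻¹) ≤
          K₂ * max (1 - δ n) (1 / (n : ℝ)) := by
  refine ⟨1/12, 6, 2, by norm_num, by norm_num, ?_⟩
  intro n hn
  obtain ⟨hd0, hd1⟩ := hδ n
  set d := δ n with hd
  set M := max (1 - d) (1 / (n : ℝ)) with hM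
  have hn0 : 0 < n := by omega
  have hn' : (0:ℝ) < n := by exact_mod_cast hn0
  have hn2 : (2:ℝ) ≤ n := by exact_mod_cast hn
  have hM0 : 0 < M := lt_max_of_lt_right (by positivity)
  have hfac0 : (0:ℝ) < (Nat.factorial n : ℝ) := by
    exact_mod_cast Nat.factorial_pos n
  have hX0 : 0 ≤ (fPlus n d : ℝ) / (Nat.factorial n : ℝ) := by positivity
  -- ============ LOWER BOUND ============
  set f0 := Nat.floor ((1-d)*((n:ℝ)-1)) with hf0
  set mnat := max 1 f0 with hmnat
  have hm1 : 0 < mnat := by omega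
  have hm1R : (1:ℝ) ≤ (mnat:ℝ) := by exact_mod_cast hm1
  have hfloor_le : (f0 : ℝ) ≤ (1-d)*((n:ℝ)-1) := Nat.floor_le (by nlinarith)
  have hfn : (f0:ℝ) ≤ (n:ℝ) - 1 := by nlinarith
  have hmnR_le : (mnat : ℝ) ≤ (n:ℝ) - 1 := by
    rcases max_cases 1 f0 with ⟨h1, _⟩ | ⟨h1, _⟩ <;> rw [hmnat, h1]
    · push_cast; linarith
    · exact hfn
  have hmn : mnat ≤ n := by
    have : (mnat:ℝ) ≤ (n:ℝ) := by linarith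
    exact_mod_cast this
  -- the comparability condition
  have hcond : d * ((n : ℝ) * ((n : ℝ) - 1) / 2)
      ≤ (compCount n (blockOrder n mnat) : ℝ) := by
    by_cases h0 : f0 = 0
    · have : mnat = 1 := by omega
      rw [this]
      exact chain_compCount n d hd1
    · have hm_eq : mnat = f0 := by omega
      have hpc := pair_count n (blockOrder n mnat)
      have hib := incPairs_block_le n mnat hm1
      have hnn : (n:ℝ) * n ≤ n + 2 * (compCount n (blockOrder n mnat) : ℝ)
          + n * mnat := by
        have : n * n ≤ n + 2 * compCount n (blockOrder n mnat) + n * mnat := by omega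
        exact_mod_cast this
      have hmle : (mnat : ℝ) ≤ (1-d)*((n:ℝ)-1) := by
        rw [hm_eq]; exact hfloor_le
      nlinarith
  -- the key numeric chain
  have hlin := BlockAux.block_lower n mnat hm1
  have hkey := key_nat n mnat hm1 hmn
  have hge := fPlus_ge n d hcond
  have hfkey : ((mnat:ℝ))^n * (Nat.factorial n : ℝ) ≤ (fPlus n d : ℝ) * (3*(n:ℝ))^n := by
    have hNat : mnat ^ n * Nat.factorial n ≤ fPlus n d * (3*n)^n := by
      calc mnat ^ n * Nat.factorial n
          ≤ (Nat.factorial mnat) ^ (n / mnat) * Nat.factorial (n % mnat) * (3 * n) ^ n :=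
            hkey
        _ ≤ linExtCount n (blockOrder n mnat) * (3*n)^n :=
            Nat.mul_le_mul_right _ hlin
        _ ≤ fPlus n d * (3*n)^n := Nat.mul_le_mul_right _ hge
    exact_mod_cast hNat
  have hXge : ((mnat:ℝ)/(3*(n:ℝ)))^n ≤ (fPlus n d : ℝ) / (Nat.factorial n : ℝ) := by
    rw [div_pow, div_le_div_iff₀ (by positivity) hfac0]
    calc ((mnat:ℝ))^n * (Nat.factorial n : ℝ) ≤ (fPlus n d : ℝ) * (3*(n:ℝ))^n := hfkey
      _ = (fPlus n d : ℝ) * ((3*(n:ℝ)))^n := rfl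
  -- 2*mnat ≥ (1-d)*(n-1)
  have h2m : (1-d)*((n:ℝ)-1) ≤ 2*(mnat:ℝ) := by
    by_cases h0 : f0 = 0
    · have hlt : (1-d)*((n:ℝ)-1) < 1 := by
        have := Nat.lt_one_iff.mpr h0
        have h2 := (Nat.floor_eq_zero).mp h0
        linarith
      linarith
    · have hm_eq : mnat = f0 := by omega
      have hlt : (1-d)*((n:ℝ)-1) < (f0:ℝ) + 1 := Nat.lt_floor_add_one _
      have : (1:ℝ) ≤ (f0:ℝ) := by
        have : 1 ≤ f0 := by omega
        exact_mod_cast this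
      rw [hm_eq]
      linarith
  have hM_le : M ≤ 4*(mnat:ℝ)/(n:ℝ) := by
    apply max_le
    · rw [le_div_iff₀ hn']
      nlinarith
    · rw [div_le_div_iff₀ hn' hn']
      nlinarith
  constructor
  -- lower bound
  · have hbase : (0:ℝ) ≤ (mnat:ℝ)/(3*(n:ℝ)) := by positivity
    have heq : (((mnat:ℝ)/(3*(n:ℝ)))^n)^((n:ℝ)⁻¹) = (mnat:ℝ)/(3*(n:ℝ)) :=
      Real.pow_rpow_inv_natCast hbase hn0.ne'
    calc (1/12) * M ≤ (1/12) * (4*(mnat:ℝ)/(n:ℝ)) :=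
          mul_le_mul_of_nonneg_left hM_le (by norm_num)
      _ = (mnat:ℝ)/(3*(n:ℝ)) := by field_simp; ring
      _ = (((mnat:ℝ)/(3*(n:ℝ)))^n)^((n:ℝ)⁻¹) := heq.symm
      _ ≤ ((fPlus n d : ℝ) / (Nat.factorial n : ℝ)) ^ ((n : ℝ)⁻¹) :=
          Real.rpow_le_rpow (by positivity) hXge (by positivity)
  -- ============ UPPER BOUND ============
  · obtain ⟨P, hP, hPl⟩ := fPlus_mem n d hd1
    have hup : (fPlus n d : ℝ) ≤ ((1-d)*(n:ℝ) + 1)^n := by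
      rw [← hPl]
      have h1 : (linExtCount n P : ℝ) ≤ ∏ x : Fin n, ((incN n P x : ℝ) + 1) := by
        have := linExt_le_prod n P
        have hcast : ((∏ x : Fin n, (incN n P x + 1) : ℕ) : ℝ)
            = ∏ x : Fin n, ((incN n P x : ℝ) + 1) := by
          push_cast
          rfl
        rw [← hcast]
        exact_mod_cast this
      have h2 : ∏ x : Fin n, ((incN n P x : ℝ) + 1)
          ≤ ((∑ x : Fin n, ((incN n P x : ℝ) + 1)) / n) ^ n :=
        prod_le_avg_pow n hn0 _ (fun x => by positivity)
      have hsum : ∑ x : Fin n, ((incN n P x : ℝ) + 1) = (incPairs n P : ℝ) + n := by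
        rw [Finset.sum_add_distrib]
        simp only [Finset.sum_const, Finset.card_univ, Fintype.card_fin, nsmul_eq_mul, mul_one]
        congr 1
        rw [← sum_incN n P]
        push_cast
        rfl
      have hpcR : (n:ℝ) * n = n + 2 * (compCount n P : ℝ) + (incPairs n P : ℝ) := by
        exact_mod_cast pair_count n P
      have havg : (∑ x : Fin n, ((incN n P x : ℝ) + 1)) / n ≤ (1-d)*(n:ℝ) + 1 := by
        rw [hsum, div_le_iff₀ hn']
        have hdn : d*(n:ℝ) ≤ (n:ℝ) := by nlinarith
        nlinarith [hP, hdn, hpcR]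
      calc (linExtCount n P : ℝ) ≤ ∏ x : Fin n, ((incN n P x : ℝ) + 1) := h1
        _ ≤ ((∑ x : Fin n, ((incN n P x : ℝ) + 1)) / n) ^ n := h2
        _ ≤ ((1-d)*(n:ℝ) + 1)^n := by
            apply pow_le_pow_left₀ _ havg
            positivity
    have hnfac : ((n:ℝ)/3)^n ≤ (Nat.factorial n : ℝ) := by
      have := pow_le_three_pow_mul_factorial n
      rw [div_pow, div_le_iff₀ (by positivity)]
      linarith [this]
    have hA0 : (0:ℝ) ≤ (1-d)*(n:ℝ) + 1 := by nlinarith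
    have hXle : (fPlus n d : ℝ) / (Nat.factorial n : ℝ) ≤ (6*M)^n := by
      have hstep : (fPlus n d : ℝ) / (Nat.factorial n : ℝ)
          ≤ ((1-d)*(n:ℝ) + 1)^n / ((n:ℝ)/3)^n :=
        div_le_div₀ (pow_nonneg hA0 n) hup (by positivity) hnfac
      have heq2 : ((1-d)*(n:ℝ) + 1)^n / ((n:ℝ)/3)^n
          = ((3*((1-d)*(n:ℝ) + 1))/(n:ℝ))^n := by
        rw [← div_pow]
        congr 1
        field_simp
      have hA : (3*((1-d)*(n:ℝ) + 1))/(n:ℝ) ≤ 6*M := by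
        rw [div_le_iff₀ hn']
        have hM1 : 1 - d ≤ M := le_max_left _ _
        have hM2 : 1/(n:ℝ) ≤ M := le_max_right _ _
        have h1nM : (1:ℝ) ≤ M * n := (div_le_iff₀ hn').mp hM2
        have hprod : (1-d)*(n:ℝ) ≤ M*(n:ℝ) := mul_le_mul_of_nonneg_right hM1 hn'.le
        nlinarith
      calc (fPlus n d : ℝ) / (Nat.factorial n : ℝ)
          ≤ ((1-d)*(n:ℝ) + 1)^n / ((n:ℝ)/3)^n := hstep
        _ = ((3*((1-d)*(n:ℝ) + 1))/(n:ℝ))^n := heq2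
        _ ≤ (6*M)^n := pow_le_pow_left₀ (by positivity) hA n
    have heq3 : ((6*M)^n)^((n:ℝ)⁻¹) = 6*M :=
      Real.pow_rpow_inv_natCast (by positivity) hn0.ne'
    calc ((fPlus n d : ℝ) / (Nat.factorial n : ℝ)) ^ ((n : ℝ)⁻¹)
        ≤ ((6*M)^n)^((n:ℝ)⁻¹) := Real.rpow_le_rpow hX0 hXle (by positivity)
      _ = 6*M := heq3
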